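/- Let EF be an evolution frame with finite event class EC such that weak equivalence ≡⁰_EF has finite index d with respect to a successor-closed set S of knowledge states, and suppose k-equivalence implies strong equivalence on S. Then the number of equivalence classes of strong equivalence ≡_EF with respect to S is at most d^max(2·|EC|^k, k+1). -/

import Mathlib

structure KState (Rule Event : Type) : Type where
  kb : Set Rule
  events : List Event

/-- Append a sequence of events to a knowledge state. -/
def KState.append {Rule Event : Type} (s : KState Rule Event) (es : List Event) :
    KState Rule Event := ⟨s.kb, s.events ++ es⟩

/-- All events of the list belong to the event class `EC`. -/
def InEC {Event : Type} (EC : Set Event) (es : List Event) : Prop := ∀ E ∈ es, E ∈ EC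

/-- Strong equivalence of knowledge states with respect to belief operator `B`. -/
def StrongEquiv {Rule Event : Type} (B : KState Rule Event → Set Rule) (EC : Set Event)
    (s s' : KState Rule Event) : Prop :=
  ∀ es : List Event, InEC EC es → B (s.append es) = B (s'.append es)

/-- k-equivalence of knowledge states. -/
def KEquiv {Rule Event : Type} (B : KState Rule Event → Set Rule) (EC : Set Event) (k : ℕ)
    (s s' : KState Rule Event) : Prop :=
  ∀ es : List Event, InEC EC es → es.length ≤ k → B (s.append es) = B (s'.append es)

/-- The equivalence class of `s` within `S` under the relation `R`. -/
def cls {α : Type} (R : α → α → Prop) (S : Set α) (s : α) : Set α := {t ∈ S | R s t}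

/-- The relation `R` has finite index with respect to `S`:
    it partitions `S` into finitely many classes. -/
def FiniteIndex {α : Type} (R : α → α → Prop) (S : Set α) : Prop :=
  (cls R S '' S).Finite

/-- `S` is closed under taking successor knowledge states (one per event of `EC`). -/
def SuccClosed {Rule Event : Type} (EC : Set Event) (S : Set (KState Rule Event)) : Prop :=
  ∀ s ∈ S, ∀ E ∈ EC, s.append [E] ∈ S

-- auxiliary lemmas

lemma KState.append_nil {Rule Event : Type} (s : KState Rule Event) : s.append [] = s := by
  simp [KState.append]

lemma KState.append_append {Rule Event : Type} (s : KState Rule Event) (l1 l2 : List Event) :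
    (s.append l1).append l2 = s.append (l1 ++ l2) := by
  simp [KState.append]

lemma append_mem_of_succClosed {Rule Event : Type} {EC : Set Event}
    {S : Set (KState Rule Event)} (hS : SuccClosed EC S) :
    ∀ (l : List Event), InEC EC l → ∀ s ∈ S, s.append l ∈ S := by
  intro l
  induction l with
  | nil => intro _ s hs; rwa [KState.append_nil]
  | cons a l ih =>
      intro hl s hs
      have : s.append (a :: l) = (s.append [a]).append l := by
        rw [KState.append_append]; rfl
      rw [this]
      exact ih (fun E hE => hl E (List.mem_cons_of_mem a hE))
        _ (hS s hs a (hl a List.mem_cons_self))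

lemma sum_pow_le (n k : ℕ) : ∑ i ∈ Finset.range (k + 1), n ^ i ≤ max (2 * n ^ k) (k + 1) := by
  rcases le_or_gt n 1 with hn | hn
  · refine le_trans ?_ (le_max_right _ _)
    calc ∑ i ∈ Finset.range (k + 1), n ^ i ≤ ∑ _i ∈ Finset.range (k + 1), 1 := by
          apply Finset.sum_le_sum
          intro i _
          exact (Nat.pow_le_pow_left hn i).trans (by simp)
      _ = k + 1 := by simp
  · refine le_trans ?_ (le_max_left _ _)
    induction k with
    | zero => simp
    | succ k ih =>
        rw [Finset.sum_range_succ]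
        have h1 : 2 * n ^ k ≤ n ^ (k + 1) := by
          rw [pow_succ']
          exact Nat.mul_le_mul_right _ hn
        calc ∑ i ∈ Finset.range (k + 1), n ^ i + n ^ (k + 1)
            ≤ 2 * n ^ k + n ^ (k + 1) := by omega
          _ ≤ n ^ (k + 1) + n ^ (k + 1) := by omega
          _ = 2 * n ^ (k + 1) := by ring

/-- If the event class `EC` is finite, `S` is successor closed, weak
    equivalence has finite index `d` with respect to `S`, and `k`-equivalence implies
    strong equivalence on `S`, then strong equivalence has at most
    `d ^ max (2 * |EC| ^ k) (k + 1)` classes with respect to `S`. -/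
theorem strongEquiv_index_bound {Rule Event : Type}
    (B : KState Rule Event → Set Rule) (EC : Set Event)
    (S : Set (KState Rule Event)) (k d : ℕ)
    (hEC : EC.Finite) (hS : SuccClosed EC S)
    (hw : (cls (KEquiv B EC 0) S '' S).Finite)
    (hd : (cls (KEquiv B EC 0) S '' S).ncard = d)
    (hk : ∀ s ∈ S, ∀ s' ∈ S, KEquiv B EC k s s' → StrongEquiv B EC s s') :
    (cls (StrongEquiv B EC) S '' S).Finite ∧
      (cls (StrongEquiv B EC) S '' S).ncard ≤ d ^ max (2 * EC.ncard ^ k) (k + 1) := by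
  classical
  set ECf : Finset Event := hEC.toFinset with hECf
  set Wf : Finset (Set (KState Rule Event)) := hw.toFinset with hWf
  -- the domain type
  let D := Σ i : Fin (k + 1), (Fin (i : ℕ) → ↥ECf)
  -- the map: for s ∈ S, assigns to each sequence the weak class of the successor state
  have memS : ∀ (σ : D) (s : KState Rule Event), s ∈ S →
      s.append (List.ofFn fun j => ((σ.2 j : ↥ECf) : Event)) ∈ S := by
    intro σ s hs
    apply append_mem_of_succClosed hS _ _ s hs
    intro E hE
    rw [List.mem_ofFn] at hE
    obtain ⟨j, rfl⟩ := hE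
    exact hEC.mem_toFinset.mp (σ.2 j).2
  let F : (s : KState Rule Event) → s ∈ S → (D → ↥Wf) := fun s hs σ =>
    ⟨cls (KEquiv B EC 0) S (s.append (List.ofFn fun j => ((σ.2 j : ↥ECf) : Event))),
     by rw [hw.mem_toFinset]; exact Set.mem_image_of_mem _ (memS σ s hs)⟩
  -- F determines strong equivalence
  have key : ∀ s ∈ S, ∀ s' ∈ S, ∀ (hs : s ∈ S) (hs' : s' ∈ S),
      F s hs = F s' hs' → StrongEquiv B EC s s' := by
    intro s hsm s' hsm' hs hs' hF
    apply hk s hs s' hs'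
    intro es hes hlen
    -- encode es as an element of D
    let σ : D := ⟨⟨es.length, Nat.lt_succ_of_le hlen⟩,
      fun j => ⟨es.get j, hEC.mem_toFinset.mpr (hes _ (es.get_mem j))⟩⟩
    have := congrFun hF σ
    have hlist : (List.ofFn fun j => ((σ.2 j : ↥ECf) : Event)) = es := by
      exact List.ofFn_get es
    rw [Subtype.ext_iff] at this
    simp only [F, hlist] at this
    -- this : cls weak S (s.append es) = cls weak S (s'.append es)
    have hmem : s.append es ∈ cls (KEquiv B EC 0) S (s.append es) :=
      ⟨append_mem_of_succClosed hS es hes s hsm, fun l _ _ => rfl⟩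
    rw [this] at hmem
    have := hmem.2 [] (fun E hE => absurd hE List.not_mem_nil) (by simp)
    rw [KState.append_nil, KState.append_nil] at this
    exact this.symm
  -- the injection from strong classes
  have hinj : ∃ g : ↥(cls (StrongEquiv B EC) S '' S) → (D → ↥Wf), Function.Injective g := by
    refine ⟨fun C => F (C.2.choose) (C.2.choose_spec.1), ?_⟩
    intro C C' hCC'
    have h1 := C.2.choose_spec
    have h2 := C'.2.choose_spec
    have hse : StrongEquiv B EC (C.2.choose) (C'.2.choose) :=
      key _ h1.1 _ h2.1 h1.1 h2.1 hCC'
    have hcls : cls (StrongEquiv B EC) S (C.2.choose) =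
        cls (StrongEquiv B EC) S (C'.2.choose) := by
      ext t
      constructor
      · rintro ⟨ht, hR⟩
        exact ⟨ht, fun es h => (hse es h).symm.trans (hR es h)⟩
      · rintro ⟨ht, hR⟩
        exact ⟨ht, fun es h => (hse es h).trans (hR es h)⟩
    apply Subtype.ext
    rw [← h1.2, ← h2.2, hcls]
  obtain ⟨g, hg⟩ := hinj
  have hfin : Finite ↥(cls (StrongEquiv B EC) S '' S) := Finite.of_injective g hg
  have hFinite : (cls (StrongEquiv B EC) S '' S).Finite := Set.finite_coe_iff.mp hfin
  refine ⟨hFinite, ?_⟩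
  have hle : (cls (StrongEquiv B EC) S '' S).ncard ≤ Nat.card (D → ↥Wf) := by
    rw [← Nat.card_coe_set_eq]
    exact Nat.card_le_card_of_injective g hg
  have hcardD : Fintype.card D = ∑ i ∈ Finset.range (k + 1), EC.ncard ^ i := by
    rw [Fintype.card_sigma]
    rw [Fin.sum_univ_eq_sum_range (fun i => Fintype.card (Fin i → ↥ECf))]
    congr 1
    ext i
    rw [Fintype.card_fun, Fintype.card_coe, Fintype.card_fin]
    congr 1
    rw [hECf]
    exact (Set.ncard_eq_toFinset_card _ hEC).symm
  have hcardW : Fintype.card ↥Wf = d := by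
    rw [Fintype.card_coe, hWf, ← hd]
    exact (Set.ncard_eq_toFinset_card _ hw).symm
  have hfun : Nat.card (D → ↥Wf) = d ^ Fintype.card D := by
    rw [Nat.card_eq_fintype_card, Fintype.card_fun, hcardW]
  have hDpos : 1 ≤ Fintype.card D := by
    rw [hcardD, Finset.sum_range_succ']
    simp
  have hDle : Fintype.card D ≤ max (2 * EC.ncard ^ k) (k + 1) := by
    rw [hcardD]; exact sum_pow_le _ _
  refine hle.trans ?_
  rw [hfun]
  rcases Nat.eq_zero_or_pos d with rfl | hdpos
  · rw [Nat.zero_pow hDpos, Nat.zero_pow (lt_max_iff.mpr (Or.inr k.succ_pos))]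
  · exact Nat.pow_le_pow_right hdpos hDle
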